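/- Let (Ω, ℱ, P_S), (X, 𝒳, P_x), and (D, 𝒟, P_d) be probability spaces. Let G : Ω × X × D → ℝ be measurable with respect to the product σ-algebra with 0 ≤ G ≤ U for some U > 0, and let C : Ω × X → ℝ be measurable. Let τ > 0, M ≥ 1 an integer, and α₁, l, δ₁, δ₂ ∈ (0,1) with α₁ < l·δ₂ and M ≥ (U²/(2·τ²))·ln(1/((1−l)·δ₂)). If P_S{ω : (P_x ⊗ P_d^M)({(x, d₁,…,d_M) : (1/M)·Σ_{j=1}^M G(ω, x, d_j) > C(ω, x) − τ}) ≤ α₁} ≥ 1 − δ₁, then P_S{ω : P_x({x ∈ X : ∫ G(ω, x, d) dP_d(d) ≤ C(ω, x)}) ≥ 1 − α₁/(l·δ₂)} ≥ 1 − δ₁. -/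

import Mathlib

open Real MeasureTheory ProbabilityTheory


lemma phi_pos {p : ℝ} (hp0 : 0 ≤ p) (hp1 : p ≤ 1) (x : ℝ) : 0 < 1 - p + p * Real.exp x := by
  rcases le_or_gt (Real.exp x) 1 with hx | hx
  · nlinarith [Real.exp_pos x]
  · nlinarith [Real.exp_pos x]

lemma hoeffding_core {p : ℝ} (hp0 : 0 ≤ p) (hp1 : p ≤ 1) (h : ℝ) :
    Real.log (1 - p + p * Real.exp h) ≤ p * h + h ^ 2 / 8 := by
  set φ : ℝ → ℝ := fun x => 1 - p + p * Real.exp x with hφdef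
  have hφ : ∀ x, 0 < φ x := phi_pos hp0 hp1
  set F : ℝ → ℝ := fun x => p * x + x ^ 2 / 8 - Real.log (φ x) with hFdef
  set G : ℝ → ℝ := fun x => p + x / 4 - p * Real.exp x / φ x with hGdef
  have hφd : ∀ x, HasDerivAt φ (p * Real.exp x) x := by
    intro x
    exact ((Real.hasDerivAt_exp x).const_mul p).const_add (1 - p)
  have hFd : ∀ x, HasDerivAt F (G x) x := by
    intro x
    have h1 : HasDerivAt (fun x => Real.log (φ x)) (p * Real.exp x / φ x) x :=
      (hφd x).log (hφ x).ne'
    have h2 : HasDerivAt (fun x : ℝ => p * x + x ^ 2 / 8) (p + x / 4) x := by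
      have := ((hasDerivAt_pow 2 x).div_const 8).const_add (0 : ℝ)
      have h3 : HasDerivAt (fun x : ℝ => p * x) p x := by
        simpa using (hasDerivAt_id x).const_mul p
      have h4 : HasDerivAt (fun x : ℝ => x ^ 2 / 8) (x / 4) x := by
        have := (hasDerivAt_pow 2 x).div_const 8
        refine this.congr_deriv ?_
        norm_num
        ring
      exact h3.add h4
    exact h2.sub h1
  have hGd : ∀ x, HasDerivAt G (1 / 4 - p * Real.exp x * (1 - p) / (φ x) ^ 2) x := by
    intro x
    have hnum : HasDerivAt (fun x => p * Real.exp x) (p * Real.exp x) x :=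
      (Real.hasDerivAt_exp x).const_mul p
    have hdiv : HasDerivAt (fun x => p * Real.exp x / φ x)
        ((p * Real.exp x * φ x - p * Real.exp x * (p * Real.exp x)) / (φ x) ^ 2) x :=
      hnum.div (hφd x) (hφ x).ne'
    have hlin : HasDerivAt (fun x : ℝ => p + x / 4) (1 / 4) x := by
      simpa using ((hasDerivAt_id x).div_const 4).const_add p
    have := hlin.sub hdiv
    refine this.congr_deriv ?_
    have : φ x = 1 - p + p * Real.exp x := rfl
    rw [this]
    ring
  have hG'nonneg : ∀ x, 0 ≤ 1 / 4 - p * Real.exp x * (1 - p) / (φ x) ^ 2 := by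
    intro x
    have h1 : 0 < φ x := hφ x
    have h2 : φ x = 1 - p + p * Real.exp x := rfl
    rw [h2] at h1 ⊢
    rw [sub_nonneg, div_le_iff₀ (by positivity)]
    nlinarith [sq_nonneg ((1 - p) - p * Real.exp x)]
  have hGmono : Monotone G :=
    monotone_of_deriv_nonneg (fun x => (hGd x).differentiableAt)
      (fun x => by rw [(hGd x).deriv]; exact hG'nonneg x)
  have hG0 : G 0 = 0 := by
    have h1 : φ 0 = 1 := by simp [hφdef]
    simp [hGdef, h1]
  have hF0 : F 0 = 0 := by
    have h1 : φ 0 = 1 := by simp [hφdef]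
    simp [hFdef, h1]
  have hFdiff : Differentiable ℝ F := fun x => (hFd x).differentiableAt
  have hFderiv : ∀ x, deriv F x = G x := fun x => (hFd x).deriv
  have key : 0 ≤ F h := by
    rcases le_or_gt 0 h with hh | hh
    · have hmono : MonotoneOn F (Set.Ici 0) := by
        apply monotoneOn_of_deriv_nonneg (convex_Ici 0) hFdiff.continuous.continuousOn
          hFdiff.differentiableOn
        intro x hx
        rw [hFderiv]
        rw [interior_Ici] at hx
        have := hGmono (le_of_lt hx)
        rw [hG0] at this
        exact this
      have := hmono (Set.self_mem_Ici) hh hh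
      rwa [hF0] at this
    · have hanti : AntitoneOn F (Set.Iic 0) := by
        apply antitoneOn_of_deriv_nonpos (convex_Iic 0) hFdiff.continuous.continuousOn
          hFdiff.differentiableOn
        intro x hx
        rw [hFderiv]
        rw [interior_Iic] at hx
        have := hGmono (le_of_lt hx)
        rw [hG0] at this
        exact this
      have := hanti (le_of_lt hh) (Set.self_mem_Iic) (le_of_lt hh)
      rwa [hF0] at this
  have : Real.log (φ h) ≤ p * h + h ^ 2 / 8 := by
    simp only [hFdef] at key
    linarith
  exact this

lemma hoeffding_mgf {D : Type*} [MeasurableSpace D] (Pd : Measure D) [IsProbabilityMeasure Pd]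
    (Y : D → ℝ) (hY : Measurable Y) (U : ℝ) (hU : 0 < U)
    (hY0 : ∀ d, 0 ≤ Y d) (hYU : ∀ d, Y d ≤ U) (t : ℝ) :
    ∫ d, Real.exp (t * (Y d - ∫ d', Y d' ∂Pd)) ∂Pd ≤ Real.exp (t ^ 2 * U ^ 2 / 8) := by
  set μ := ∫ d', Y d' ∂Pd with hμdef
  have hYint : Integrable Y Pd := by
    refine Integrable.mono' (integrable_const U) hY.aestronglyMeasurable ?_
    exact ae_of_all _ fun d => by
      rw [Real.norm_eq_abs, abs_of_nonneg (hY0 d)]; exact hYU d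
  have hμ0 : 0 ≤ μ := integral_nonneg hY0
  have hμU : μ ≤ U := by
    have := integral_mono hYint (integrable_const U) hYU
    simpa using this
  set p := μ / U with hpdef
  have hp0 : 0 ≤ p := div_nonneg hμ0 hU.le
  have hp1 : p ≤ 1 := (div_le_one hU).mpr hμU
  -- pointwise convexity bound
  have hpt : ∀ d, Real.exp (t * Y d) ≤ (1 - Y d / U) + (Y d / U) * Real.exp (t * U) := by
    intro d
    have hθ0 : 0 ≤ Y d / U := div_nonneg (hY0 d) hU.le
    have hθ1 : Y d / U ≤ 1 := (div_le_one hU).mpr (hYU d)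
    have := convexOn_exp.2 (Set.mem_univ (0:ℝ)) (Set.mem_univ (t*U))
      (by linarith : (0:ℝ) ≤ 1 - Y d / U) hθ0 (by ring)
    simp only [smul_eq_mul, mul_zero, zero_add, Real.exp_zero, mul_one] at this
    have harg : Y d / U * (t * U) = t * Y d := by field_simp
    rwa [harg] at this
  -- integrate
  have hint_exp : Integrable (fun d => Real.exp (t * Y d)) Pd := by
    refine Integrable.mono' (integrable_const (Real.exp (|t| * U)))
      ((Real.measurable_exp.comp (hY.const_mul t)).aestronglyMeasurable) ?_
    refine ae_of_all _ fun d => ?_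
    rw [Real.norm_eq_abs, abs_of_pos (Real.exp_pos _), Real.exp_le_exp]
    calc t * Y d ≤ |t * Y d| := le_abs_self _
      _ = |t| * |Y d| := abs_mul _ _
      _ ≤ |t| * U := by
          apply mul_le_mul_of_nonneg_left _ (abs_nonneg t)
          rw [abs_of_nonneg (hY0 d)]; exact hYU d
  have hint_rhs : Integrable (fun d => (1 - Y d / U) + (Y d / U) * Real.exp (t * U)) Pd := by
    apply Integrable.add
    · exact (integrable_const 1).sub (hYint.div_const U)
    · exact (hYint.div_const U).mul_const _
  have hstep : ∫ d, Real.exp (t * Y d) ∂Pd ≤ 1 - p + p * Real.exp (t * U) := by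
    have := integral_mono hint_exp hint_rhs hpt
    calc ∫ d, Real.exp (t * Y d) ∂Pd
        ≤ ∫ d, ((1 - Y d / U) + (Y d / U) * Real.exp (t * U)) ∂Pd := this
      _ = 1 - p + p * Real.exp (t * U) := by
          have h1 : Integrable (fun d => 1 - Y d / U) Pd := by
            exact (integrable_const (1:ℝ)).sub (hYint.div_const U)
          have h2 : Integrable (fun d => Y d / U * Real.exp (t * U)) Pd :=
            (hYint.div_const U).mul_const _
          rw [integral_add h1 h2, integral_mul_const]
          have h3 : ∫ d, (1 - Y d / U) ∂Pd = 1 - μ / U := by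
            have h4 : Integrable (fun d => Y d / U) Pd := hYint.div_const U
            rw [integral_sub (integrable_const 1) h4, integral_div, integral_const]
            simp [hμdef]
          rw [h3, integral_div]
  have hfact : ∀ d, Real.exp (t * (Y d - μ)) = Real.exp (-(t * μ)) * Real.exp (t * Y d) := by
    intro d; rw [← Real.exp_add]; ring_nf
  calc ∫ d, Real.exp (t * (Y d - μ)) ∂Pd
      = Real.exp (-(t * μ)) * ∫ d, Real.exp (t * Y d) ∂Pd := by
        simp_rw [hfact]; rw [integral_const_mul]
    _ ≤ Real.exp (-(t * μ)) * (1 - p + p * Real.exp (t * U)) := by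
        apply mul_le_mul_of_nonneg_left hstep (Real.exp_pos _).le
    _ ≤ Real.exp (-(t * μ)) * Real.exp (p * (t * U) + (t * U) ^ 2 / 8) := by
        apply mul_le_mul_of_nonneg_left _ (Real.exp_pos _).le
        have hpos := phi_pos hp0 hp1 (t * U)
        have hlog := hoeffding_core hp0 hp1 (t * U)
        calc 1 - p + p * Real.exp (t * U)
            = Real.exp (Real.log (1 - p + p * Real.exp (t * U))) := (Real.exp_log hpos).symm
          _ ≤ Real.exp (p * (t * U) + (t * U) ^ 2 / 8) := Real.exp_le_exp.mpr hlog
    _ = Real.exp (t ^ 2 * U ^ 2 / 8) := by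
        rw [← Real.exp_add]
        congr 1
        have : p * (t * U) = t * μ := by
          rw [hpdef]; field_simp
        rw [this]; ring

lemma integral_pi_prod {D : Type*} [MeasurableSpace D] (Pd : Measure D) [SigmaFinite Pd]
    (M : ℕ) (f : D → ℝ) :
    ∫ x : Fin M → D, ∏ j, f (x j) ∂(Measure.pi fun _ => Pd) = (∫ d, f d ∂Pd) ^ M := by
  letI : MeasureSpace D := ⟨Pd⟩
  haveI : SigmaFinite (volume : Measure D) := ‹_›
  have hv : (Measure.pi fun _ : Fin M => Pd) = (volume : Measure (Fin M → D)) :=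
    (volume_pi).symm
  rw [hv]
  have := MeasureTheory.integral_fintype_prod_volume_eq_pow (ι := Fin M) f
  rw [Fintype.card_fin] at this
  exact this

lemma chernoff_pi {D : Type*} [MeasurableSpace D] (Pd : Measure D) [IsProbabilityMeasure Pd]
    (Y : D → ℝ) (hY : Measurable Y) (U : ℝ) (hU : 0 < U)
    (hY0 : ∀ d, 0 ≤ Y d) (hYU : ∀ d, Y d ≤ U) (τ : ℝ) (hτ : 0 < τ) (M : ℕ) :
    ((Measure.pi fun _ : Fin M => Pd)
      {d : Fin M → D | ∑ j, Y (d j) ≤ (M : ℝ) * ((∫ d', Y d' ∂Pd) - τ)}).toReal ≤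
      Real.exp (-(2 * τ ^ 2 / U ^ 2) * M) := by
  set μ := ∫ d', Y d' ∂Pd with hμdef
  set t₀ : ℝ := 4 * τ / U ^ 2 with ht₀def
  have ht₀ : 0 < t₀ := by positivity
  set P := Measure.pi fun _ : Fin M => Pd with hPdef
  haveI : IsProbabilityMeasure P := by rw [hPdef]; infer_instance
  set S : (Fin M → D) → ℝ := fun d => ∑ j, Y (d j) with hSdef
  have hSmeas : Measurable S :=
    Finset.univ.measurable_sum (fun j _ => hY.comp (measurable_pi_apply j))
  have h_int : Integrable (fun d => Real.exp ((-t₀) * S d)) P := by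
    refine Integrable.mono' (integrable_const (1:ℝ))
      ((Real.measurable_exp.comp (hSmeas.const_mul (-t₀))).aestronglyMeasurable) ?_
    refine ae_of_all _ fun d => ?_
    rw [Real.norm_eq_abs, abs_of_pos (Real.exp_pos _)]
    rw [show (1:ℝ) = Real.exp 0 from (Real.exp_zero).symm, Real.exp_le_exp]
    have hS0 : 0 ≤ S d := Finset.sum_nonneg fun j _ => hY0 _
    nlinarith
  have hcher := measure_le_le_exp_mul_mgf (X := S) (μ := P) ((M : ℝ) * (μ - τ))
    (neg_nonpos.mpr ht₀.le) h_int
  refine le_trans hcher ?_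
  -- compute the mgf
  have hmgf : mgf S P (-t₀) = (∫ d, Real.exp ((-t₀) * Y d) ∂Pd) ^ M := by
    rw [mgf]
    have : ∀ d : Fin M → D, Real.exp ((-t₀) * S d) = ∏ j, Real.exp ((-t₀) * Y (d j)) := by
      intro d
      rw [hSdef]
      simp only [Finset.mul_sum]
      exact Real.exp_sum _ _
    calc ∫ d, Real.exp ((-t₀) * S d) ∂P
        = ∫ d, ∏ j, Real.exp ((-t₀) * Y (d j)) ∂P := by
          exact integral_congr_ae (ae_of_all _ this)
      _ = (∫ d, Real.exp ((-t₀) * Y d) ∂Pd) ^ M := by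
          rw [hPdef]
          exact integral_pi_prod Pd M (fun d => Real.exp ((-t₀) * Y d))
  have hfac : ∫ d, Real.exp ((-t₀) * Y d) ∂Pd ≤ Real.exp (t₀ ^ 2 * U ^ 2 / 8 - t₀ * μ) := by
    have hh := hoeffding_mgf Pd Y hY U hU hY0 hYU (-t₀)
    have heq : ∀ d, Real.exp ((-t₀) * (Y d - μ)) = Real.exp (t₀ * μ) * Real.exp ((-t₀) * Y d) := by
      intro d; rw [← Real.exp_add]; ring_nf
    rw [← hμdef] at hh
    have hint2 : ∫ d, Real.exp ((-t₀) * (Y d - μ)) ∂Pd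
        = Real.exp (t₀ * μ) * ∫ d, Real.exp ((-t₀) * Y d) ∂Pd := by
      simp_rw [heq]; rw [integral_const_mul]
    rw [hint2] at hh
    have hepos := Real.exp_pos (t₀ * μ)
    rw [show t₀ ^ 2 * U ^ 2 / 8 - t₀ * μ = (-t₀) ^ 2 * U ^ 2 / 8 + (-(t₀ * μ)) by ring,
      Real.exp_add]
    rw [Real.exp_neg]
    rw [← div_eq_mul_inv, le_div_iff₀ hepos, mul_comm]
    exact hh
  have hnn : 0 ≤ ∫ d, Real.exp ((-t₀) * Y d) ∂Pd :=
    integral_nonneg fun d => (Real.exp_pos _).le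
  calc Real.exp (-(-t₀) * ((M : ℝ) * (μ - τ))) * mgf S P (-t₀)
      ≤ Real.exp (t₀ * ((M : ℝ) * (μ - τ))) * Real.exp (t₀ ^ 2 * U ^ 2 / 8 - t₀ * μ) ^ M := by
        rw [hmgf, neg_neg]
        exact mul_le_mul_of_nonneg_left (pow_le_pow_left₀ hnn hfac M) (Real.exp_pos _).le
    _ = Real.exp (t₀ * ((M : ℝ) * (μ - τ)) + (M : ℝ) * (t₀ ^ 2 * U ^ 2 / 8 - t₀ * μ)) := by
        rw [← Real.exp_nat_mul, ← Real.exp_add]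
    _ ≤ Real.exp (-(2 * τ ^ 2 / U ^ 2) * M) := by
        rw [Real.exp_le_exp]
        have hU2 : U ^ 2 ≠ 0 := by positivity
        have : t₀ * ((M : ℝ) * (μ - τ)) + (M : ℝ) * (t₀ ^ 2 * U ^ 2 / 8 - t₀ * μ)
            = (M : ℝ) * (t₀ ^ 2 * U ^ 2 / 8 - t₀ * τ) := by ring
        rw [this, ht₀def]
        have h2 : (4 * τ / U ^ 2) ^ 2 * U ^ 2 / 8 - 4 * τ / U ^ 2 * τ = -(2 * τ ^ 2 / U ^ 2) := by
          field_simp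
          ring
        rw [h2]
        ring_nf
        exact le_refl _


/-- Lifting the bounded-mean threshold bound through the sampling distribution: if, with
confidence `1 − δ₁` over the sample `ω`, the probability that the empirical mean of
`G(ω,x,·)` over `M` draws exceeds `C(ω,x) − τ` is at most `α₁`, and `M` meets the
Hoeffding bound for range `[0,U]`, then with the same confidence at least a
`1 − α₁/(l·δ₂)` fraction of states satisfies `∫ G(ω,x,d) dP_d ≤ C(ω,x)`. -/
theorem pac_lift_bounded_mean_bound {Ω X D : Type*}
    [MeasurableSpace Ω] [MeasurableSpace X] [MeasurableSpace D]
    (PS : Measure Ω) (Px : Measure X) (Pd : Measure D)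
    [IsProbabilityMeasure PS] [IsProbabilityMeasure Px] [IsProbabilityMeasure Pd]
    (G : Ω × X × D → ℝ) (hG : Measurable G)
    (U : ℝ) (hU : 0 < U) (hGbdd : ∀ q, 0 ≤ G q ∧ G q ≤ U)
    (C : Ω × X → ℝ) (hC : Measurable C)
    (τ : ℝ) (hτ : 0 < τ)
    (M : ℕ) (hM : 1 ≤ M)
    (α₁ l δ₁ δ₂ : ℝ)
    (hα₁ : α₁ ∈ Set.Ioo (0 : ℝ) 1) (hl : l ∈ Set.Ioo (0 : ℝ) 1)
    (hδ₁ : δ₁ ∈ Set.Ioo (0 : ℝ) 1) (hδ₂ : δ₂ ∈ Set.Ioo (0 : ℝ) 1)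
    (hlt : α₁ < l * δ₂)
    (hMbound : (M : ℝ) ≥ (U ^ 2 / (2 * τ ^ 2)) * Real.log (1 / ((1 - l) * δ₂)))
    (hconf : PS {ω | (Px.prod (Measure.pi fun _ : Fin M => Pd))
        {p : X × (Fin M → D) |
          (1 / (M : ℝ)) * ∑ j, G (ω, p.1, p.2 j) > C (ω, p.1) - τ} ≤
      ENNReal.ofReal α₁} ≥ ENNReal.ofReal (1 - δ₁)) :
    PS {ω | Px {x | (∫ d, G (ω, x, d) ∂Pd) ≤ C (ω, x)} ≥
        ENNReal.ofReal (1 - α₁ / (l * δ₂))} ≥ ENNReal.ofReal (1 - δ₁) := by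
  
  have hl0 := hl.1; have hl1 := hl.2
  have hδ₂0 := hδ₂.1; have hδ₂1 := hδ₂.2
  have hα₁0 := hα₁.1
  set ε : ℝ := (1 - l) * δ₂ with hεdef
  have hε : 0 < ε := mul_pos (by linarith) hδ₂0
  have hld : 0 < l * δ₂ := mul_pos hl0 hδ₂0
  -- the exponential bound from hMbound
  have ebound : Real.exp (-(2 * τ ^ 2 / U ^ 2) * M) ≤ ε := by
    rw [one_div, Real.log_inv] at hMbound
    have hc : (0:ℝ) < 2 * τ ^ 2 / U ^ 2 := by positivity
    have h4 : -Real.log ε ≤ 2 * τ ^ 2 / U ^ 2 * M := by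
      calc -Real.log ε = (2 * τ ^ 2 / U ^ 2) * (U ^ 2 / (2 * τ ^ 2) * (-Real.log ε)) := by
            field_simp
        _ ≤ (2 * τ ^ 2 / U ^ 2) * M := mul_le_mul_of_nonneg_left hMbound hc.le
    calc Real.exp (-(2 * τ ^ 2 / U ^ 2) * M) ≤ Real.exp (Real.log ε) := by
          rw [Real.exp_le_exp]; linarith
      _ = ε := Real.exp_log hε
  set P : Measure (Fin M → D) := Measure.pi fun _ : Fin M => Pd with hPdef
  refine le_trans hconf (measure_mono ?_)
  intro ω hω
  simp only [Set.mem_setOf_eq] at hω ⊢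
  -- measurability of the product event
  have hAmeas : MeasurableSet {p : X × (Fin M → D) |
      (1 / (M : ℝ)) * ∑ j, G (ω, p.1, p.2 j) > C (ω, p.1) - τ} := by
    apply measurableSet_lt
    · exact (hC.comp (measurable_const.prodMk measurable_fst)).sub measurable_const
    · exact (Finset.univ.measurable_sum fun j _ => hG.comp
        (measurable_const.prodMk (measurable_fst.prodMk
          ((measurable_pi_apply j).comp measurable_snd)))).const_mul _
  -- measurability of the mean function
  have hGx : Measurable (fun q : X × D => G (ω, q.1, q.2)) :=
    hG.comp (measurable_const.prodMk measurable_id)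
  have hint_meas : Measurable (fun x => ∫ d, G (ω, x, d) ∂Pd) :=
    hGx.stronglyMeasurable.integral_prod_right'.measurable
  set B : Set X := {x | C (ω, x) < ∫ d, G (ω, x, d) ∂Pd} with hBdef
  have hB : MeasurableSet B :=
    measurableSet_lt (hC.comp (measurable_const.prodMk measurable_id)) hint_meas
  have hMpos : (0:ℝ) < (M:ℝ) := by
    have : (1:ℝ) ≤ (M:ℝ) := by exact_mod_cast hM
    linarith
  -- slice lower bound on the bad set
  have hslice : ∀ x ∈ B, ENNReal.ofReal (l * δ₂) ≤
      P (Prod.mk x ⁻¹' {p : X × (Fin M → D) |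
        (1 / (M : ℝ)) * ∑ j, G (ω, p.1, p.2 j) > C (ω, p.1) - τ}) := by
    intro x hx
    have hx' : C (ω, x) < ∫ d, G (ω, x, d) ∂Pd := hx
    set Y : D → ℝ := fun d => G (ω, x, d) with hYdef
    have hYmeas : Measurable Y :=
      hG.comp (measurable_const.prodMk (measurable_const.prodMk measurable_id))
    have hchern := chernoff_pi Pd Y hYmeas U hU (fun d => (hGbdd _).1) (fun d => (hGbdd _).2)
      τ hτ M
    have hT'le : P {d : Fin M → D | ∑ j, Y (d j) ≤ (M:ℝ) * ((∫ d', Y d' ∂Pd) - τ)} ≤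
        ENNReal.ofReal ε := by
      rw [ENNReal.le_ofReal_iff_toReal_le (measure_ne_top _ _) hε.le]
      exact le_trans hchern ebound
    set T : Set (Fin M → D) := {d | (1 / (M:ℝ)) * ∑ j, Y (d j) ≤ C (ω, x) - τ} with hTdef
    have hTmeas : MeasurableSet T := by
      apply measurableSet_le
      · exact (Finset.univ.measurable_sum fun j _ =>
          hYmeas.comp (measurable_pi_apply j)).const_mul _
      · exact measurable_const
    have hTsub : T ⊆ {d : Fin M → D | ∑ j, Y (d j) ≤ (M:ℝ) * ((∫ d', Y d' ∂Pd) - τ)} := by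
      intro d hd
      have hd' : (1 / (M:ℝ)) * ∑ j, Y (d j) ≤ C (ω, x) - τ := hd
      have h1 : ∑ j, Y (d j) ≤ (M:ℝ) * (C (ω, x) - τ) := by
        have := mul_le_mul_of_nonneg_left hd' hMpos.le
        calc ∑ j, Y (d j) = (M:ℝ) * ((1 / (M:ℝ)) * ∑ j, Y (d j)) := by
              field_simp
          _ ≤ (M:ℝ) * (C (ω, x) - τ) := this
      have h2 : (M:ℝ) * (C (ω, x) - τ) ≤ (M:ℝ) * ((∫ d', Y d' ∂Pd) - τ) :=
        mul_le_mul_of_nonneg_left (by linarith) hMpos.le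
      exact le_trans h1 h2
    have hPT : P T ≤ ENNReal.ofReal ε := le_trans (measure_mono hTsub) hT'le
    have hpre : Prod.mk x ⁻¹' {p : X × (Fin M → D) |
        (1 / (M : ℝ)) * ∑ j, G (ω, p.1, p.2 j) > C (ω, p.1) - τ} = Tᶜ := by
      ext d
      simp only [Set.mem_preimage, Set.mem_setOf_eq, Set.mem_compl_iff, hTdef, not_le]
      exact Iff.rfl
    rw [hpre, prob_compl_eq_one_sub hTmeas]
    calc ENNReal.ofReal (l * δ₂) ≤ ENNReal.ofReal (1 - ε) := by
          apply ENNReal.ofReal_le_ofReal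
          rw [hεdef]; nlinarith
      _ = 1 - ENNReal.ofReal ε := by
          rw [ENNReal.ofReal_sub 1 hε.le, ENNReal.ofReal_one]
      _ ≤ 1 - P T := tsub_le_tsub_left hPT 1
  -- Fubini and the bound on Px B
  have hchain : ENNReal.ofReal (l * δ₂) * Px B ≤ ENNReal.ofReal α₁ := by
    calc ENNReal.ofReal (l * δ₂) * Px B
        = ∫⁻ _ in B, ENNReal.ofReal (l * δ₂) ∂Px := (setLIntegral_const _ _).symm
      _ ≤ ∫⁻ x in B, P (Prod.mk x ⁻¹' {p : X × (Fin M → D) |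
            (1 / (M : ℝ)) * ∑ j, G (ω, p.1, p.2 j) > C (ω, p.1) - τ}) ∂Px :=
          setLIntegral_mono (measurable_measure_prodMk_left hAmeas) hslice
      _ ≤ ∫⁻ x, P (Prod.mk x ⁻¹' {p : X × (Fin M → D) |
            (1 / (M : ℝ)) * ∑ j, G (ω, p.1, p.2 j) > C (ω, p.1) - τ}) ∂Px :=
          setLIntegral_le_lintegral _ _
      _ = (Px.prod P) {p : X × (Fin M → D) |
            (1 / (M : ℝ)) * ∑ j, G (ω, p.1, p.2 j) > C (ω, p.1) - τ} :=
          (Measure.prod_apply hAmeas).symm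
      _ ≤ ENNReal.ofReal α₁ := hω
  have hPxB : Px B ≤ ENNReal.ofReal (α₁ / (l * δ₂)) := by
    rw [ENNReal.ofReal_div_of_pos hld]
    refine (ENNReal.le_div_iff_mul_le (Or.inl (ENNReal.ofReal_pos.mpr hld).ne')
      (Or.inl ENNReal.ofReal_ne_top)).mpr ?_
    rw [mul_comm]; exact hchain
  have hcompl : {x | (∫ d, G (ω, x, d) ∂Pd) ≤ C (ω, x)} = Bᶜ := by
    ext x
    simp only [Set.mem_setOf_eq, Set.mem_compl_iff, hBdef, not_lt]
  rw [hcompl, prob_compl_eq_one_sub hB]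
  calc ENNReal.ofReal (1 - α₁ / (l * δ₂))
      = 1 - ENNReal.ofReal (α₁ / (l * δ₂)) := by
        rw [ENNReal.ofReal_sub 1 (by positivity), ENNReal.ofReal_one]
    _ ≤ 1 - Px B := tsub_le_tsub_left hPxB 1
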